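/- Let λ₁,λ₂,λ₃,λ₄ ∈ ℝ and let 𝔤 be the 4-dimensional real Lie algebra with orthonormal basis X₁,X₂,X₃,X₄ (inner product g) and brackets [X₁,X₂] = −[X₃,X₄] = λ₁X₁ + λ₂X₂ + λ₃X₃ + λ₄X₄, [X₁,X₃] = [X₂,X₄] = λ₄X₁ − λ₃X₂ + λ₂X₃ − λ₁X₄, [X₂,X₃] = [X₁,X₄] = 0. Define ∇ by 2g(∇ₓy,z) = g([x,y],z) + g([z,x],y) + g([z,y],x), R(x,y,z,w) = g(∇ₓ∇_y z − ∇_y∇ₓ z − ∇_{[x,y]} z, w), and the sectional curvatures k_{ij} = R(Xᵢ,Xⱼ,Xⱼ,Xᵢ). Then the two P-invariant basis 2-planes have equal sectional curvature, k₁₃ = k₂₄, if and only if λ₁² − λ₂² + λ₃² − λ₄² = 0. -/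

import Mathlib

open scoped RealInnerProductSpace

set_option maxHeartbeats 1600000

/-- In the example Lie algebra of the paper, the two `P`-invariant
basis 2-planes have equal sectional curvature, `k₁₃ = k₂₄`, iff
`λ₁² − λ₂² + λ₃² − λ₄² = 0`. -/
theorem statement_12
    (l1 l2 l3 l4 : ℝ)
    (X : Fin 4 → EuclideanSpace ℝ (Fin 4))
    (hX : ∀ i, X i = EuclideanSpace.single i 1)
    (bracket : EuclideanSpace ℝ (Fin 4) →ₗ[ℝ] EuclideanSpace ℝ (Fin 4) →ₗ[ℝ] EuclideanSpace ℝ (Fin 4))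
    (hskew : ∀ x y, bracket x y = - bracket y x)
    (hjacobi : ∀ x y z,
      bracket (bracket x y) z + bracket (bracket y z) x + bracket (bracket z x) y = 0)
    (h12 : bracket (X 0) (X 1) = l1 • X 0 + l2 • X 1 + l3 • X 2 + l4 • X 3)
    (h34 : bracket (X 2) (X 3) = -(l1 • X 0 + l2 • X 1 + l3 • X 2 + l4 • X 3))
    (h13 : bracket (X 0) (X 2) = l4 • X 0 - l3 • X 1 + l2 • X 2 - l1 • X 3)
    (h24 : bracket (X 1) (X 3) = l4 • X 0 - l3 • X 1 + l2 • X 2 - l1 • X 3)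
    (h23 : bracket (X 1) (X 2) = 0)
    (h14 : bracket (X 0) (X 3) = 0)
    (nabla : EuclideanSpace ℝ (Fin 4) → EuclideanSpace ℝ (Fin 4) → EuclideanSpace ℝ (Fin 4))
    (hKoszul : ∀ x y z, 2 * ⟪nabla x y, z⟫
      = ⟪bracket x y, z⟫ + ⟪bracket z x, y⟫ + ⟪bracket z y, x⟫)
    (R : EuclideanSpace ℝ (Fin 4) → EuclideanSpace ℝ (Fin 4) → EuclideanSpace ℝ (Fin 4) → EuclideanSpace ℝ (Fin 4) → ℝ)
    (hR : ∀ x y z w,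
      R x y z w = ⟪nabla x (nabla y z) - nabla y (nabla x z) - nabla (bracket x y) z, w⟫) :
    R (X 0) (X 2) (X 2) (X 0) = R (X 1) (X 3) (X 3) (X 1)
      ↔ l1 ^ 2 - l2 ^ 2 + l3 ^ 2 - l4 ^ 2 = 0 := by
  classical
  -- bracket of a vector with itself is zero
  have hself : ∀ v : EuclideanSpace ℝ (Fin 4), bracket v v = 0 := by
    intro v
    have h := hskew v v
    have h2 : (2:ℝ) • bracket v v = 0 := by
      rw [two_smul]; nth_rewrite 1 [h]; simp
    rcases smul_eq_zero.mp h2 with h' | h'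
    · norm_num at h'
    · exact h'
  -- components via inner products with the basis
  have hinner : ∀ (v : EuclideanSpace ℝ (Fin 4)) (i : Fin 4), ⟪v, X i⟫ = v i := by
    intro v i
    rw [hX i]
    simpa using EuclideanSpace.inner_single_right (𝕜 := ℝ) i 1 v
  -- component formula for nabla
  have hNab : ∀ (x y : EuclideanSpace ℝ (Fin 4)) (k : Fin 4),
      nabla x y k = (⟪bracket x y, X k⟫ + ⟪bracket (X k) x, y⟫ + ⟪bracket (X k) y, x⟫) / 2 := by
    intro x y k
    have h := hKoszul x y (X k)
    rw [hinner] at h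
    linarith
  -- remaining bracket table entries
  have b20 : bracket (X 2) (X 0) = -(l4 • X 0 - l3 • X 1 + l2 • X 2 - l1 • X 3) := by
    rw [hskew, h13]
  have b21 : bracket (X 2) (X 1) = 0 := by rw [hskew, h23]; simp
  have b30 : bracket (X 3) (X 0) = 0 := by rw [hskew, h14]; simp
  have b31 : bracket (X 3) (X 1) = -(l4 • X 0 - l3 • X 1 + l2 • X 2 - l1 • X 3) := by
    rw [hskew, h24]
  have b32 : bracket (X 3) (X 2) = l1 • X 0 + l2 • X 1 + l3 • X 2 + l4 • X 3 := by
    rw [hskew, h34]; simp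
  have b10 : bracket (X 1) (X 0) = -(l1 • X 0 + l2 • X 1 + l3 • X 2 + l4 • X 3) := by
    rw [hskew, h12]
  have b00 : bracket (X 0) (X 0) = 0 := hself _
  have b11 : bracket (X 1) (X 1) = 0 := hself _
  have b22 : bracket (X 2) (X 2) = 0 := hself _
  have b33 : bracket (X 3) (X 3) = 0 := hself _
  -- inner products of basis vectors
  have hXX : ∀ i j : Fin 4, ⟪X i, X j⟫ = if i = j then (1:ℝ) else 0 := by
    intro i j
    rw [hinner, hX i, EuclideanSpace.single_apply]
    simp [eq_comm]
  -- explicit nabla values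
  have hA : nabla (X 2) (X 2) = l2 • X 0 + l3 • X 3 := by
    ext k
    rw [hNab]
    fin_cases k <;>
      simp [b22, b20, b21, b32, h13, h23, h34, hXX,
        inner_add_left, inner_sub_left, inner_neg_left, real_inner_smul_left] <;>
      simp [hX, EuclideanSpace.single_apply] <;> ring
  have hB : nabla (X 0) (X 2) = l4 • X 0 - l3 • X 1 := by
    ext k
    rw [hNab]
    fin_cases k <;>
      simp [b00, b10, b20, b30, b22, b21, b32, h12, h13, h14, h23, h34, hXX,
        inner_add_left, inner_sub_left, inner_neg_left, real_inner_smul_left] <;>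
      simp [hX, EuclideanSpace.single_apply] <;> ring
  have hA' : nabla (X 3) (X 3) = -(l1 • X 1) - l4 • X 2 := by
    ext k
    rw [hNab]
    fin_cases k <;>
      simp [b33, b30, b31, b32, h14, h24, h34, hXX,
        inner_add_left, inner_sub_left, inner_neg_left, real_inner_smul_left] <;>
      simp [hX, EuclideanSpace.single_apply] <;> ring
  have hB' : nabla (X 1) (X 3) = l4 • X 0 - l3 • X 1 := by
    ext k
    rw [hNab]
    fin_cases k <;>
      simp [b11, b10, b21, b31, b33, b30, h12, h23, h24, h14, h34, hXX,
        inner_add_left, inner_sub_left, inner_neg_left, real_inner_smul_left] <;>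
      simp [hX, EuclideanSpace.single_apply] <;> ring
  -- compute the two sectional curvatures
  have hk13 : R (X 0) (X 2) (X 2) (X 0) = -(l2 ^ 2 + l4 ^ 2) := by
    rw [hR, hinner]
    have e1 : (nabla (X 0) (nabla (X 2) (X 2))) 0 = 0 := by
      rw [hA, hNab]
      simp [b00, b10, b20, b30, b11, b21, b31, b22, b32, b33, h12, h13, h14, h23, h24, h34, hself, map_add, map_smul, inner_add_left, inner_add_right,
        inner_sub_left, inner_sub_right, inner_neg_left, inner_neg_right,
        real_inner_smul_left, real_inner_smul_right, hXX, -PiLp.inner_apply]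
    have e2 : (nabla (X 2) (nabla (X 0) (X 2))) 0 = 0 := by
      rw [hB, hNab]
      simp [b00, b10, b20, b30, b11, b21, b31, b22, b32, b33, h12, h13, h14, h23, h24, h34, hself, map_add, map_sub, map_smul,
        inner_add_left, inner_add_right, inner_sub_left, inner_sub_right,
        inner_neg_left, inner_neg_right,
        real_inner_smul_left, real_inner_smul_right, hXX, -PiLp.inner_apply, -inner_self_eq_norm_sq_to_K]
    have e3 : (nabla (bracket (X 0) (X 2)) (X 2)) 0 = l2 ^ 2 + l4 ^ 2 := by
      rw [hNab, h13]
      simp [b00, b10, b20, b30, b11, b21, b31, b22, b32, b33, h12, h13, h14, h23, h24, h34,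
        map_add, map_sub, map_smul,
        LinearMap.add_apply, LinearMap.sub_apply, LinearMap.smul_apply,
        inner_add_left, inner_add_right, inner_sub_left, inner_sub_right,
        inner_neg_left, inner_neg_right,
        real_inner_smul_left, real_inner_smul_right, hXX, -PiLp.inner_apply, -inner_self_eq_norm_sq_to_K]
      ring
    simp only [PiLp.sub_apply, e1, e2, e3]
    ring
  have hk24 : R (X 1) (X 3) (X 3) (X 1) = -(l1 ^ 2 + l3 ^ 2) := by
    rw [hR, hinner]
    have e1 : (nabla (X 1) (nabla (X 3) (X 3))) 1 = 0 := by
      rw [hA', hNab]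
      simp [b00, b10, b20, b30, b11, b21, b31, b22, b32, b33, h12, h13, h14, h23, h24, h34, hself, map_add, map_sub, map_neg, map_smul,
        inner_add_left, inner_add_right, inner_sub_left, inner_sub_right,
        inner_neg_left, inner_neg_right,
        real_inner_smul_left, real_inner_smul_right, hXX, -PiLp.inner_apply]
    have e2 : (nabla (X 3) (nabla (X 1) (X 3))) 1 = 0 := by
      rw [hB', hNab]
      simp [b00, b10, b20, b30, b11, b21, b31, b22, b32, b33, h12, h13, h14, h23, h24, h34, hself, map_add, map_sub, map_smul,
        inner_add_left, inner_add_right, inner_sub_left, inner_sub_right,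
        inner_neg_left, inner_neg_right,
        real_inner_smul_left, real_inner_smul_right, hXX, -PiLp.inner_apply, -inner_self_eq_norm_sq_to_K]
    have e3 : (nabla (bracket (X 1) (X 3)) (X 3)) 1 = l1 ^ 2 + l3 ^ 2 := by
      rw [hNab, h24]
      simp [b00, b10, b20, b30, b11, b21, b31, b22, b32, b33, h12, h13, h14, h23, h24, h34,
        map_add, map_sub, map_smul,
        LinearMap.add_apply, LinearMap.sub_apply, LinearMap.smul_apply,
        inner_add_left, inner_add_right, inner_sub_left, inner_sub_right,
        inner_neg_left, inner_neg_right,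
        real_inner_smul_left, real_inner_smul_right, hXX, -PiLp.inner_apply, -inner_self_eq_norm_sq_to_K]
      ring
    simp only [PiLp.sub_apply, e1, e2, e3]
    ring
  rw [hk13, hk24]
  constructor
  · intro h; linarith
  · intro h; linarith
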